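/- Let m be a square-free positive integer and let B be a commutative algebra over A = ℤ/mℤ that is free of finite rank as an A-module. If p > rk_A(B) for all primes p dividing m, then the trace radical Trad(B/A) = { x ∈ B : Tr_{B/A}(xB) = 0 } equals the nilradical nil(B) of B. -/

import Mathlib

/-- In a finite monoid, some positive power of every element is idempotent. -/
lemma aux_exists_pow_idem {M : Type*} [Monoid M] [Finite M] (x : M) :
    ∃ N, 1 ≤ N ∧ IsIdempotentElem (x ^ N) := by
  obtain ⟨i, j, hne, heq⟩ := Finite.exists_ne_map_eq_of_infinite (fun n : ℕ => x ^ n)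
  wlog hij : i < j generalizing i j
  · exact this j i hne.symm heq.symm (by omega)
  set d := j - i with hd
  have hd1 : 1 ≤ d := by omega
  have key : ∀ k, i ≤ k → x ^ (k + d) = x ^ k := by
    intro k hk
    have : k = i + (k - i) := by omega
    rw [this]
    rw [show i + (k - i) + d = j + (k-i) by omega, pow_add, pow_add, ← heq]
  have key2 : ∀ c k, i ≤ k → x ^ (k + c * d) = x ^ k := by
    intro c
    induction c with
    | zero => simp
    | succ c ih =>
      intro k hk
      have : k + (c + 1) * d = (k + d) + c * d := by ring
      rw [this, ih (k + d) (by omega), key k hk]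
  refine ⟨(i + 1) * d, by nlinarith, ?_⟩
  unfold IsIdempotentElem
  rw [← pow_add]
  exact key2 (i + 1) ((i + 1) * d) (by nlinarith)

/-- A matrix over `ZMod p`, `p` prime bigger than the size, all of whose positive
powers have trace zero, is nilpotent. -/
lemma aux_matrix_nilpotent {ι : Type*} [Fintype ι] [DecidableEq ι] {p : ℕ} [Fact p.Prime]
    (hlt : Fintype.card ι < p) (Mp : Matrix ι ι (ZMod p))
    (h : ∀ j, 1 ≤ j → Matrix.trace (Mp ^ j) = 0) : ∃ N, 1 ≤ N ∧ Mp ^ N = 0 := by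
  obtain ⟨N, hN1, hidem⟩ := aux_exists_pow_idem Mp
  refine ⟨N, hN1, ?_⟩
  set E := Mp ^ N with hE
  set f : (ι → ZMod p) →ₗ[ZMod p] (ι → ZMod p) := Matrix.toLin' E with hf
  have hff : f ∘ₗ f = f := by
    rw [hf, ← Matrix.toLin'_mul, hidem]
  have hproj : LinearMap.IsProj (LinearMap.range f) f := by
    constructor
    · intro x; exact LinearMap.mem_range_self f x
    · rintro x ⟨y, rfl⟩
      exact congrFun (congrArg DFunLike.coe hff) y
  have htrf : LinearMap.trace (ZMod p) (ι → ZMod p) f = Matrix.trace E := by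
    rw [hf, LinearMap.trace_eq_matrix_trace (ZMod p) (Pi.basisFun (ZMod p) ι),
      LinearMap.toMatrix_eq_toMatrix', LinearMap.toMatrix'_toLin']
  have h0 : (Module.finrank (ZMod p) (LinearMap.range f) : ZMod p) = 0 := by
    rw [← hproj.trace, htrf, hE]
    exact h N hN1
  have hdvd : p ∣ Module.finrank (ZMod p) (LinearMap.range f) :=
    (ZMod.natCast_eq_zero_iff _ _).mp h0
  have hle : Module.finrank (ZMod p) (LinearMap.range f) ≤ Fintype.card ι := by
    have := Submodule.finrank_le (LinearMap.range f)
    simpa [Module.finrank_fintype_fun_eq_card] using this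
  have hzero : Module.finrank (ZMod p) (LinearMap.range f) = 0 := by
    by_contra hne
    exact absurd (Nat.le_of_dvd (Nat.pos_of_ne_zero hne) hdvd) (by omega)
  have hrange : LinearMap.range f = ⊥ := Submodule.finrank_eq_zero.mp hzero
  have hf0 : f = 0 := LinearMap.range_eq_bot.mp hrange
  have : Matrix.toLin' E = Matrix.toLin' 0 := by rw [← hf, hf0]; simp
  exact Matrix.toLin'.injective this

/-- Let `m` be a square-free positive integer and `B` a commutative algebra over
`A = ℤ/mℤ` that is free of finite rank as an `A`-module. If `p > rk_A(B)` for all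
primes `p` dividing `m`, then the trace radical `Trad(B/A) = {x ∈ B : Tr_{B/A}(xB) = 0}`
equals the nilradical of `B`. -/
theorem stmt_13 (m : ℕ) (hm : 0 < m) (hsf : Squarefree m)
    {B : Type*} [CommRing B] [Algebra (ZMod m) B]
    [Module.Free (ZMod m) B] [Module.Finite (ZMod m) B]
    (hp : ∀ p : ℕ, p.Prime → p ∣ m → Module.finrank (ZMod m) B < p) :
    ∀ x : B, (∀ y : B, Algebra.trace (ZMod m) B (x * y) = 0) ↔ x ∈ nilradical B := by
  haveI : NeZero m := ⟨hm.ne'⟩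
  by_cases hm1 : m = 1
  · subst hm1
    haveI : Subsingleton (ZMod 1) := inferInstance
    haveI : Subsingleton B := Module.subsingleton (ZMod 1) B
    intro x
    constructor
    · intro _
      exact (Subsingleton.elim x 0) ▸ (IsNilpotent.zero : IsNilpotent (0 : B))
    · intro _ y
      exact Subsingleton.elim _ _
  haveI : Fact (1 < m) := ⟨by omega⟩
  haveI : IsReduced (ZMod m) := isReduced_zmod.mpr (Or.inl hsf)
  intro x
  constructor
  · -- hard direction
    intro h
    -- trace of all positive powers of x vanishes
    have htr : ∀ j, 1 ≤ j → Algebra.trace (ZMod m) B (x ^ j) = 0 := by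
      intro j hj
      have : x ^ j = x * x ^ (j - 1) := by
        rw [← pow_succ']; congr 1; omega
      rw [this]; exact h _
    classical
    set ι := Module.Free.ChooseBasisIndex (ZMod m) B with hι
    set b : Module.Basis ι (ZMod m) B := Module.Free.chooseBasis (ZMod m) B with hb
    set M : Matrix ι ι (ZMod m) := Algebra.leftMulMatrix b x with hM
    have hMtr : ∀ j, 1 ≤ j → Matrix.trace (M ^ j) = 0 := by
      intro j hj
      rw [hM, ← map_pow, ← Algebra.trace_eq_matrix_trace b]
      exact htr j hj
    -- per prime claim
    have key : ∀ p : ℕ, ∃ z : B, ∃ N : ℕ, p ∈ m.primeFactors → x ^ N = (p : B) * z := by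
      intro p
      by_cases hpmem : p ∈ m.primeFactors
      swap
      · exact ⟨0, 0, fun h => absurd h hpmem⟩
      obtain ⟨pp, hpdvd, -⟩ := Nat.mem_primeFactors.mp hpmem
      haveI : Fact p.Prime := ⟨pp⟩
      set φ : ZMod m →+* ZMod p := ZMod.castHom hpdvd (ZMod p) with hφ
      set Mp : Matrix ι ι (ZMod p) := φ.mapMatrix M with hMp
      have hMptr : ∀ j, 1 ≤ j → Matrix.trace (Mp ^ j) = 0 := by
        intro j hj
        rw [hMp, ← map_pow]
        have : Matrix.trace (φ.mapMatrix (M ^ j)) = φ (Matrix.trace (M ^ j)) := by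
          simp [Matrix.trace, Matrix.diag, map_sum]
        rw [this, hMtr j hj, map_zero]
      have hcard : Fintype.card ι < p := by
        rw [← Module.finrank_eq_card_chooseBasisIndex]
        exact hp p pp hpdvd
      obtain ⟨N, hN1, hMpN⟩ := aux_matrix_nilpotent hcard Mp hMptr
      -- entries of M ^ N are divisible by p
      have hent : ∀ i j : ι, φ ((M ^ N) i j) = 0 := by
        intro i j
        have : φ.mapMatrix (M ^ N) = 0 := by rw [map_pow, ← hMp, hMpN]
        have := congrFun (congrFun (congrArg (fun A : Matrix ι ι (ZMod p) => (A : ι → ι → ZMod p)) this) i) j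
        simpa using this
      -- coefficients of x ^ N are divisible by p
      have hrepr : b.repr (x ^ N) = (M ^ N).mulVec (b.repr 1) := by
        have := Algebra.leftMulMatrix_mulVec_repr b (x ^ N) 1
        rw [mul_one] at this
        rw [← this, hM, map_pow]
      have hcoef : ∀ i : ι, φ (b.repr (x ^ N) i) = 0 := by
        intro i
        rw [hrepr]
        show φ (∑ j, (M ^ N) i j * b.repr 1 j) = 0
        rw [map_sum]
        refine Finset.sum_eq_zero fun j _ => ?_
        rw [map_mul, hent i j, zero_mul]
      -- hence each coefficient is p times something
      have hcoef' : ∀ i : ι, ∃ d : ZMod m, b.repr (x ^ N) i = (p : ZMod m) * d := by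
        intro i
        set a := b.repr (x ^ N) i with ha
        have h1 : ((a.val : ℕ) : ZMod p) = 0 := by
          have : φ ((a.val : ZMod m)) = ((a.val : ℕ) : ZMod p) := map_natCast φ a.val
          rw [← this, ZMod.natCast_zmod_val, hcoef i]
        obtain ⟨t, ht⟩ := (ZMod.natCast_eq_zero_iff _ _).mp h1
        refine ⟨(t : ZMod m), ?_⟩
        rw [← ZMod.natCast_zmod_val a, ht]
        push_cast
        ring
      choose d hd using hcoef'
      refine ⟨∑ i, d i • b i, N, fun _ => ?_⟩
      calc x ^ N = ∑ i, b.repr (x ^ N) i • b i := (b.sum_repr (x ^ N)).symm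
        _ = ∑ i, ((p : ZMod m) * d i) • b i := by
            refine Finset.sum_congr rfl fun i _ => by rw [hd i]
        _ = (p : B) * ∑ i, d i • b i := by
            rw [Finset.mul_sum]
            refine Finset.sum_congr rfl fun i _ => ?_
            rw [mul_smul, Nat.cast_smul_eq_nsmul, nsmul_eq_mul]
    choose z N hzN using key
    refine ⟨∑ p ∈ m.primeFactors, N p, ?_⟩
    calc x ^ (∑ p ∈ m.primeFactors, N p)
        = ∏ p ∈ m.primeFactors, x ^ (N p) := (Finset.prod_pow_eq_pow_sum _ _ _).symm
      _ = ∏ p ∈ m.primeFactors, ((p : B) * z p) :=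
          Finset.prod_congr rfl fun p hp' => hzN p hp'
      _ = (∏ p ∈ m.primeFactors, (p : B)) * ∏ p ∈ m.primeFactors, z p :=
          Finset.prod_mul_distrib
      _ = 0 := by
          have h1 : (∏ p ∈ m.primeFactors, (p : B)) = ((m : ℕ) : B) := by
            rw [← Nat.cast_prod, Nat.prod_primeFactors_of_squarefree hsf]
          have h2 : ((m : ℕ) : B) = 0 := by
            rw [← map_natCast (algebraMap (ZMod m) B) m, ZMod.natCast_self, map_zero]
          rw [h1, h2, zero_mul]
  · -- easy direction
    intro hx y
    have hxy : IsNilpotent (x * y) := by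
      obtain ⟨n, hn⟩ := hx
      exact ⟨n, by rw [mul_pow, hn, zero_mul]⟩
    exact (Algebra.isNilpotent_trace_of_isNilpotent (R := ZMod m) hxy).eq_zero
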